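/- For angles φ₁, φ₂ ∈ [-φₘ, φₘ] with 0 < φₘ ≤ π/18, the minimum of A = cos(δ)cos(φ₁)cos(φ₂) + sin(φ₁)sin(φ₂) over φ₁, φ₂ is attained at φ₁ = -φ₂ with |φ₁| = φₘ, and equals cos(δ) - (1+cos(δ))·sin²(φₘ). -/
import Mathlib


open Real

theorem length_constraint_min_attainment
    (φm δ : ℝ) (hφm : 0 < φm) (hφm' : φm ≤ π / 18) :
    (∀ φ1 ∈ Set.Icc (-φm) φm, ∀ φ2 ∈ Set.Icc (-φm) φm,
      cos δ * cos φ1 * cos φ2 + sin φ1 * sin φ2 ≥ cos δ - (1 + cos δ) * (sin φm) ^ 2) ∧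
    (∀ φ1 φ2 : ℝ, φ1 = -φ2 → |φ1| = φm →
      cos δ * cos φ1 * cos φ2 + sin φ1 * sin φ2 = cos δ - (1 + cos δ) * (sin φm) ^ 2) := by
  have hpi : (0:ℝ) < π := Real.pi_pos
  constructor
  · intro φ1 h1 φ2 h2
    obtain ⟨h1l, h1r⟩ := h1
    obtain ⟨h2l, h2r⟩ := h2
    have habs : |φ1 - φ2| ≤ 2 * φm := by
      rw [abs_le]; constructor <;> linarith
    have hcos1 : cos (2 * φm) ≤ cos (φ1 - φ2) := by
      rw [← Real.cos_abs (φ1 - φ2)]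
      apply Real.cos_le_cos_of_nonneg_of_le_pi (abs_nonneg _) (by linarith) habs
    have hcos2 : cos (φ1 + φ2) ≤ 1 := Real.cos_le_one _
    have hsub := Real.cos_sub φ1 φ2
    have hadd := Real.cos_add φ1 φ2
    have h2m : cos (2 * φm) = 1 - 2 * sin φm ^ 2 := by
      rw [Real.cos_two_mul]
      have := Real.sin_sq_add_cos_sq φm
      nlinarith
    have hd1 := Real.neg_one_le_cos δ
    have hd2 := Real.cos_le_one δ
    nlinarith [mul_nonneg (by linarith : (0:ℝ) ≤ 1 + cos δ)
        (by linarith : (0:ℝ) ≤ cos (φ1 - φ2) - cos (2 * φm)),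
      mul_nonneg (by linarith : (0:ℝ) ≤ 1 - cos δ)
        (by linarith : (0:ℝ) ≤ 1 - cos (φ1 + φ2))]
  · intro φ1 φ2 heq habs
    have hs : sin φ1 ^ 2 = sin φm ^ 2 := by
      rcases abs_cases φ1 with ⟨h, _⟩ | ⟨h, _⟩
      · rw [← habs, h]
      · rw [show φ1 = -φm by linarith [habs ▸ h], Real.sin_neg]; ring
    have hc := Real.sin_sq_add_cos_sq φ1
    subst heq
    simp only [Real.sin_neg, Real.cos_neg, neg_sq] at hs hc ⊢
    linear_combination cos δ * hc - (1 + cos δ) * hs
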